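/- Let η ∈ (0, 1/(3√2)] and let (δ₁,δ₂,ε₁,ε₂) ∈ [−1,1]^4 satisfy 0 ≤ δ₁ − δ₂ ≤ η, 0 ≤ ε₁ − ε₂ ≤ η, and 0 < λ ≤ 1/2, where λ := ½((δ₁+δ₂)² + (ε₁+ε₂)²). Then ¼[(1−δ₁δ₂)(δ₁+δ₂)² + (1−ε₁ε₂)(ε₁+ε₂)² − (δ₁+δ₂)(ε₁+ε₂)(δ₁²+δ₂²−ε₁²−ε₂²)] > 0. (This expression equals λ̇ along solutions of the ODE system δ̇ᵢ = ¼(1−δᵢ²)(δ_{3−i}+ε₁+ε₂), ε̇ᵢ = −¼(1−εᵢ²)(δ₁+δ₂−ε_{3−i}).) -/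
import Mathlib


noncomputable section

set_option maxHeartbeats 1000000

/-- (Lemma on `λ̇ > 0`.) Let `η ∈ (0, 1/(3√2)]` and let
`(δ₁,δ₂,ε₁,ε₂) ∈ [−1,1]⁴` satisfy `0 ≤ δ₁ − δ₂ ≤ η`, `0 ≤ ε₁ − ε₂ ≤ η`, and
`0 < λ ≤ 1/2` where `λ = ½((δ₁+δ₂)² + (ε₁+ε₂)²)`. Then
`¼[(1−δ₁δ₂)(δ₁+δ₂)² + (1−ε₁ε₂)(ε₁+ε₂)² − (δ₁+δ₂)(ε₁+ε₂)(δ₁²+δ₂²−ε₁²−ε₂²)] > 0`. -/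
theorem stmt9 (η d1 d2 e1 e2 : ℝ)
    (hη : 0 < η ∧ η ≤ 1 / (3 * Real.sqrt 2))
    (hd1 : d1 ∈ Set.Icc (-1:ℝ) 1) (hd2 : d2 ∈ Set.Icc (-1:ℝ) 1)
    (he1 : e1 ∈ Set.Icc (-1:ℝ) 1) (he2 : e2 ∈ Set.Icc (-1:ℝ) 1)
    (hdd : 0 ≤ d1 - d2 ∧ d1 - d2 ≤ η)
    (hee : 0 ≤ e1 - e2 ∧ e1 - e2 ≤ η)
    (hlampos : 0 < (1/2) * ((d1 + d2) ^ 2 + (e1 + e2) ^ 2))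
    (hlamle : (1/2) * ((d1 + d2) ^ 2 + (e1 + e2) ^ 2) ≤ 1/2) :
    0 < (1/4) * ((1 - d1 * d2) * (d1 + d2) ^ 2 + (1 - e1 * e2) * (e1 + e2) ^ 2 -
      (d1 + d2) * (e1 + e2) * (d1 ^ 2 + d2 ^ 2 - e1 ^ 2 - e2 ^ 2)) := by
  obtain ⟨hη0, hηle⟩ := hη
  have hs2 : (Real.sqrt 2) ^ 2 = 2 := Real.sq_sqrt (by norm_num)
  have hs2pos : 0 < Real.sqrt 2 := Real.sqrt_pos.mpr (by norm_num)
  have hη2 : η ^ 2 ≤ 1 / 18 := by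
    have h1 : η * (3 * Real.sqrt 2) ≤ 1 := by
      rw [← le_div_iff₀ (by positivity)]; exact hηle
    nlinarith [sq_nonneg (η * (3 * Real.sqrt 2) - 1), sq_nonneg η]
  have hu2 : (d1 - d2) ^ 2 ≤ 1 / 18 := by nlinarith [hdd.1, hdd.2]
  have hv2 : (e1 - e2) ^ 2 ≤ 1 / 18 := by nlinarith [hee.1, hee.2]
  have hST1 : (d1 + d2) ^ 2 + (e1 + e2) ^ 2 ≤ 1 := by linarith
  have hSTpos : 0 < (d1 + d2) ^ 2 + (e1 + e2) ^ 2 := by linarith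
  -- f1 : the cross-quartic is dominated by 2(S²+T²)²
  have f1 : (d1 + d2) ^ 4 + (e1 + e2) ^ 4
      + 2 * (d1 + d2) * (e1 + e2) * ((d1 + d2) ^ 2 - (e1 + e2) ^ 2)
      ≤ 2 * ((d1 + d2) ^ 2 + (e1 + e2) ^ 2) ^ 2 := by
    nlinarith [sq_nonneg ((d1 + d2) ^ 2 - (e1 + e2) ^ 2 - (d1 + d2) * (e1 + e2)),
      sq_nonneg ((d1 + d2) * (e1 + e2))]
  -- f2 : (S²+T²)² ≤ S²+T²
  have f2 : ((d1 + d2) ^ 2 + (e1 + e2) ^ 2) ^ 2 ≤ (d1 + d2) ^ 2 + (e1 + e2) ^ 2 := by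
    nlinarith [hST1, hSTpos]
  -- f3 : 2STu² ≤ (S²+T²)/18
  have f3 : 2 * ((d1 + d2) * (e1 + e2)) * (d1 - d2) ^ 2
      ≤ ((d1 + d2) ^ 2 + (e1 + e2) ^ 2) / 18 := by
    nlinarith [mul_nonneg (sq_nonneg (d1 + d2 - (e1 + e2))) (sq_nonneg (d1 - d2)),
      mul_nonneg hSTpos.le (by linarith : (0:ℝ) ≤ 1/18 - (d1 - d2) ^ 2)]
  -- f4 : -2STv² ≤ (S²+T²)/18
  have f4 : -(2 * ((d1 + d2) * (e1 + e2)) * (e1 - e2) ^ 2)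
      ≤ ((d1 + d2) ^ 2 + (e1 + e2) ^ 2) / 18 := by
    nlinarith [mul_nonneg (sq_nonneg (d1 + d2 + (e1 + e2))) (sq_nonneg (e1 - e2)),
      mul_nonneg hSTpos.le (by linarith : (0:ℝ) ≤ 1/18 - (e1 - e2) ^ 2)]
  have f5 : 0 ≤ ((d1 - d2) * (d1 + d2)) ^ 2 := sq_nonneg _
  have f6 : 0 ≤ ((e1 - e2) * (e1 + e2)) ^ 2 := sq_nonneg _
  -- identity: 4 * (goal expression) in terms of S,T,u,v pieces
  have hid : (1 - d1 * d2) * (d1 + d2) ^ 2 + (1 - e1 * e2) * (e1 + e2) ^ 2 -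
      (d1 + d2) * (e1 + e2) * (d1 ^ 2 + d2 ^ 2 - e1 ^ 2 - e2 ^ 2) =
      ((d1 + d2) ^ 2 + (e1 + e2) ^ 2)
      + (((d1 - d2) * (d1 + d2)) ^ 2 + ((e1 - e2) * (e1 + e2)) ^ 2) / 4
      - ((d1 + d2) ^ 4 + (e1 + e2) ^ 4
          + 2 * (d1 + d2) * (e1 + e2) * ((d1 + d2) ^ 2 - (e1 + e2) ^ 2)) / 4
      - (2 * ((d1 + d2) * (e1 + e2)) * (d1 - d2) ^ 2) / 4
      + (2 * ((d1 + d2) * (e1 + e2)) * (e1 - e2) ^ 2) / 4 := by ring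
  linarith [f1, f2, f3, f4, f5, f6, hSTpos, hid.ge, hid.le]
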